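/- Let X be the random variable taking value -√(p/(1-p)) with probability 1-p and √((1-p)/p) with probability p, for fixed p ∈ (0,1). Then for all real t with |t| < √(p(1-p))·π, we have |E[e^{itX}]| ≤ 1 - 2t²/π². -/

import Mathlib

set_option maxHeartbeats 1600000 in
/-- Characteristic function bound for the standardized Bernoulli(p) random variable:
for |t| < √(p(1-p))·π, |E[e^{itX}]| ≤ 1 - 2t²/π². -/
theorem stmt0 (p : ℝ) (hp : p ∈ Set.Ioo (0:ℝ) 1) (t : ℝ)
    (ht : |t| < Real.sqrt (p * (1 - p)) * Real.pi) :
    ‖(1 - p : ℂ) * Complex.exp (Complex.I * (t : ℂ) * (-(Real.sqrt (p / (1 - p)) : ℝ) : ℂ)) +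
      (p : ℂ) * Complex.exp (Complex.I * (t : ℂ) * ((Real.sqrt ((1 - p) / p) : ℝ) : ℂ))‖ ≤
    1 - 2 * t ^ 2 / Real.pi ^ 2 := by
  obtain ⟨hp0, hp1⟩ := hp
  have h1p : (0:ℝ) < 1 - p := by linarith
  set sp := Real.sqrt p with hsp
  set s1 := Real.sqrt (1 - p) with hs1
  have hsp0 : 0 < sp := Real.sqrt_pos.2 hp0
  have hs10 : 0 < s1 := Real.sqrt_pos.2 h1p
  have hsp2 : sp ^ 2 = p := Real.sq_sqrt hp0.le
  have hs12 : s1 ^ 2 = 1 - p := Real.sq_sqrt h1p.le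
  have ha : Real.sqrt (p / (1 - p)) = sp / s1 := Real.sqrt_div hp0.le _
  have hb : Real.sqrt ((1 - p) / p) = s1 / sp := Real.sqrt_div h1p.le _
  have hq : Real.sqrt (p * (1 - p)) = sp * s1 := Real.sqrt_mul hp0.le _
  set s : ℝ := t / (sp * s1) with hsdef
  have hpi : (0:ℝ) < Real.pi := Real.pi_pos
  -- |s| ≤ π
  have hs_abs : |s| ≤ Real.pi := by
    rw [hsdef, abs_div, abs_of_pos (mul_pos hsp0 hs10)]
    rw [div_le_iff₀ (mul_pos hsp0 hs10)]
    rw [hq] at ht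
    nlinarith [ht]
  -- factor the expression
  have key :
      (1 - p : ℂ) * Complex.exp (Complex.I * (t : ℂ) * (-(Real.sqrt (p / (1 - p)) : ℝ) : ℂ)) +
        (p : ℂ) * Complex.exp (Complex.I * (t : ℂ) * ((Real.sqrt ((1 - p) / p) : ℝ) : ℂ)) =
      Complex.exp (((-(t * (sp / s1)) : ℝ) : ℂ) * Complex.I) *
        ((1 - p : ℂ) + (p : ℂ) * Complex.exp ((s : ℂ) * Complex.I)) := by
    rw [ha, hb]
    have h1 : Complex.I * (t : ℂ) * (-(sp / s1 : ℝ) : ℂ) =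
        ((-(t * (sp / s1)) : ℝ) : ℂ) * Complex.I := by push_cast; ring
    have hsum : sp ^ 2 + s1 ^ 2 = 1 := by rw [hsp2, hs12]; ring
    have hr : t * (s1 / sp) = -(t * (sp / s1)) + s := by
      rw [hsdef]
      field_simp
      linear_combination t * hsum
    have hrc := congrArg (fun x : ℝ => (x : ℂ)) hr
    push_cast at hrc
    have h2 : Complex.I * (t : ℂ) * ((s1 / sp : ℝ) : ℂ) =
        ((-(t * (sp / s1)) : ℝ) : ℂ) * Complex.I + (s : ℂ) * Complex.I := by
      push_cast
      linear_combination Complex.I * hrc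
    rw [h1, h2, Complex.exp_add]
    ring
  rw [key, norm_mul, Complex.norm_exp_ofReal_mul_I, one_mul]
  -- compute the squared norm
  have hnorm2 : ‖(1 - p : ℂ) + (p : ℂ) * Complex.exp ((s : ℂ) * Complex.I)‖ ^ 2 =
      1 - 2 * p * (1 - p) * (1 - Real.cos s) := by
    have he : (1 - p : ℂ) + (p : ℂ) * Complex.exp ((s : ℂ) * Complex.I) =
        ((1 - p + p * Real.cos s : ℝ) : ℂ) + ((p * Real.sin s : ℝ) : ℂ) * Complex.I := by
      rw [Complex.exp_mul_I]
      push_cast [← Complex.ofReal_cos, ← Complex.ofReal_sin]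
      ring
    rw [he]
    have := Complex.sq_norm (((1 - p + p * Real.cos s : ℝ) : ℂ) +
        ((p * Real.sin s : ℝ) : ℂ) * Complex.I)
    rw [Complex.normSq_add_mul_I] at this
    rw [this]
    linear_combination p ^ 2 * (Real.sin_sq_add_cos_sq s)
  -- cos bound
  have hcos : Real.cos s ≤ 1 - 2 / Real.pi ^ 2 * s ^ 2 :=
    Real.cos_le_one_sub_mul_cos_sq hs_abs
  -- p(1-p) s² = t²
  have hq2 : (sp * s1) ^ 2 = p * (1 - p) := by rw [mul_pow, hsp2, hs12]
  have hps : p * (1 - p) * s ^ 2 = t ^ 2 := by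
    have hpp : p * (1 - p) ≠ 0 := ne_of_gt (mul_pos hp0 h1p)
    rw [hsdef, div_pow, hq2, mul_comm, div_mul_cancel₀ _ hpp]
  -- RHS nonneg
  have ht2 : t ^ 2 < Real.pi ^ 2 / 4 := by
    rw [hq] at ht
    have habs : |t| < sp * s1 * Real.pi := ht
    have h4 : sp * s1 ≤ 1 / 2 := by nlinarith [hsp2, hs12, sq_nonneg (sp - s1), sq_nonneg (sp*s1)]
    have h5 : t ^ 2 < (sp * s1 * Real.pi) ^ 2 := by
      calc t ^ 2 = |t| ^ 2 := (sq_abs t).symm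
        _ < _ := by exact pow_lt_pow_left₀ habs (abs_nonneg t) two_ne_zero
    have h6 : (sp * s1) ^ 2 ≤ 1 / 4 := by nlinarith [h4, (mul_pos hsp0 hs10).le]
    have h7 : (sp * s1) ^ 2 * Real.pi ^ 2 ≤ 1 / 4 * Real.pi ^ 2 :=
      mul_le_mul_of_nonneg_right h6 (sq_nonneg _)
    nlinarith [h5, h7]
  have hrhs : (0:ℝ) ≤ 1 - 2 * t ^ 2 / Real.pi ^ 2 := by
    rw [sub_nonneg, div_le_one (by positivity)]
    nlinarith
  -- finish
  have hnn : (0:ℝ) ≤ ‖(1 - p : ℂ) + (p : ℂ) * Complex.exp ((s : ℂ) * Complex.I)‖ :=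
    norm_nonneg _
  have hsq : ‖(1 - p : ℂ) + (p : ℂ) * Complex.exp ((s : ℂ) * Complex.I)‖ ^ 2 ≤
      (1 - 2 * t ^ 2 / Real.pi ^ 2) ^ 2 := by
    rw [hnorm2]
    have h1 : 1 - Real.cos s ≥ 2 / Real.pi ^ 2 * s ^ 2 := by linarith
    have h2 : 2 * p * (1 - p) * (1 - Real.cos s) ≥ 2 * p * (1 - p) * (2 / Real.pi ^ 2 * s ^ 2) := by
      apply mul_le_mul_of_nonneg_left h1 (by nlinarith)
    have h3 : 2 * p * (1 - p) * (2 / Real.pi ^ 2 * s ^ 2) = 4 * t ^ 2 / Real.pi ^ 2 := by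
      field_simp
      nlinarith [hps]
    have hpi2 : (0:ℝ) < Real.pi ^ 2 := by positivity
    have h4 : (1 - 2 * t ^ 2 / Real.pi ^ 2) ^ 2 = 1 - 4 * t ^ 2 / Real.pi ^ 2 +
        (2 * t ^ 2 / Real.pi ^ 2) ^ 2 := by ring
    nlinarith [sq_nonneg (2 * t ^ 2 / Real.pi ^ 2)]
  nlinarith [hnn, hrhs, hsq]
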